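/- Let φ : X → Y be an FD and I an instance. If I contains no three tuples that pairwise form φ-conflicts, then I can be partitioned into two classes, each of which contains no φ-conflict. -/
import Mathlib


/-- A functional dependency `X → Y` is a pair of attribute sets; two tuples form a
`φ`-conflict if they agree on every attribute of `X` but differ on some attribute of `Y`. -/
def IsPhiConflict {α V : Type*} (X Y : Finset α) (s t : α → V) : Prop :=
  (∀ a ∈ X, s a = t a) ∧ (∃ a ∈ Y, s a ≠ t a)

instance {α V : Type*} [DecidableEq V] (X Y : Finset α) (s t : α → V) :
    Decidable (IsPhiConflict X Y s t) := by
  unfold IsPhiConflict; infer_instance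

/-- Two tuples form a conflict w.r.t. a finite FD set if they form a `φ`-conflict
for some FD `φ` of the set. -/
def IsConflict {α V : Type*} (FDs : Finset (Finset α × Finset α)) (s t : α → V) : Prop :=
  ∃ fd ∈ FDs, IsPhiConflict fd.1 fd.2 s t

instance {α V : Type*} [DecidableEq V] (FDs : Finset (Finset α × Finset α)) (s t : α → V) :
    Decidable (IsConflict FDs s t) := by
  unfold IsConflict; infer_instance

/-- A set of tuples is consistent w.r.t. an FD set if no two of its tuples form a conflict. -/
def Consistent {α V : Type*} (FDs : Finset (Finset α × Finset α)) (J : Finset (α → V)) : Prop :=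
  ∀ s ∈ J, ∀ t ∈ J, ¬ IsConflict FDs s t

/-- `opt FDs I` is the minimum of `dist(J,I) = |I| - |J|` over all consistent subsets `J ⊆ I`. -/
noncomputable def opt {α V : Type*} (FDs : Finset (Finset α × Finset α))
    (I : Finset (α → V)) : ℕ :=
  sInf {d : ℕ | ∃ J ⊆ I, Consistent FDs J ∧ d = I.card - J.card}

/-- Let `φ : X → Y` be an FD and `I` an instance.  If `I` contains no three tuples that
pairwise form `φ`-conflicts, then `I` can be partitioned into two classes (the fibers of
a two-valued coloring `f`), each of which contains no `φ`-conflict. -/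
theorem stmt10 {α V : Type*} (X Y : Finset α) (I : Finset (α → V))
    (htriad : ¬ ∃ s ∈ I, ∃ t ∈ I, ∃ u ∈ I,
      IsPhiConflict X Y s t ∧ IsPhiConflict X Y s u ∧ IsPhiConflict X Y t u) :
    ∃ f : (α → V) → Bool, ∀ s ∈ I, ∀ t ∈ I, f s = f t → ¬ IsPhiConflict X Y s t := by
  classical
  set P : ({a // a ∈ X} → V) → Prop :=
    fun k => ∃ t ∈ I, ∀ a : {a // a ∈ X}, t a.1 = k a with hPdef
  set rep : ({a // a ∈ X} → V) → Option (α → V) :=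
    fun k => if h : P k then some (Classical.choose h) else none with hrep
  refine ⟨fun s => (rep (fun a => s a.1)).elim true
      (fun u => decide (∀ a ∈ Y, s a = u a)), ?_⟩
  intro s hs t ht hf hconf
  obtain ⟨hX, a, haY, hne⟩ := hconf
  have hkey : (fun a : {a // a ∈ X} => t a.1) = fun a => s a.1 :=
    funext fun a => (hX a.1 a.2).symm
  have hPs : P (fun a : {a // a ∈ X} => s a.1) := ⟨s, hs, fun a => rfl⟩
  set u := Classical.choose hPs with hu
  obtain ⟨huI, huX⟩ := Classical.choose_spec hPs
  have hrs : rep (fun a : {a // a ∈ X} => s a.1) = some u := dif_pos hPs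
  have hrt : rep (fun a : {a // a ∈ X} => t a.1) = some u :=
    (congrArg rep hkey).trans hrs
  dsimp only at hf
  rw [hrs, hrt] at hf
  simp only [Option.elim] at hf
  have hiff : (∀ a ∈ Y, s a = u a) ↔ (∀ a ∈ Y, t a = u a) := decide_eq_decide.mp hf
  by_cases hA : ∀ a ∈ Y, s a = u a
  · exact hne ((hA a haY).trans (hiff.mp hA a haY).symm)
  · have hB : ¬ ∀ a ∈ Y, t a = u a := fun h => hA (hiff.mpr h)
    push_neg at hA hB
    obtain ⟨b, hbY, hbs⟩ := hA
    obtain ⟨c, hcY, hct⟩ := hB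
    exact htriad ⟨s, hs, t, ht, u, huI,
      ⟨hX, a, haY, hne⟩,
      ⟨fun a ha => (huX ⟨a, ha⟩).symm, b, hbY, hbs⟩,
      ⟨fun a ha => (hX a ha).symm.trans (huX ⟨a, ha⟩).symm, c, hcY, hct⟩⟩
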